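/- Given an SDBM C with variable bounds ℓ_i ≤ x_i ≤ u_i, zero remainders, and lcm of divisors D, construct the variable-bound-free SDBM C' by adding a variable x_0 with constraint x_0 ≡ 0 (mod D) and replacing each bound ℓ_i ≤ x_i ≤ u_i by ℓ_i ≤ x_i - x_0 ≤ u_i. Then C is satisfiable iff C' is satisfiable. -/
import Mathlib

/-- An SDBM `C` with variable bounds `ℓ i ≤ x i ≤ u i` and zero remainders is
satisfiable iff the variable-bound-free SDBM `C'` is, where `C'` adds a fresh
variable `x₀` with congruence `x₀ ≡ 0 (mod D)` (`D = lcm` of the divisors) and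
replaces each bound by `ℓ i ≤ x i - x₀ ≤ u i`. -/
theorem sdbm_vbf_conversion (n : ℕ) (E : Set (Fin n × Fin n × ℤ))
    (d ℓ u : Fin n → ℤ) (hd : ∀ i, 1 ≤ d i)
    (D : ℤ) (hD : D = Finset.univ.lcm d) :
    (∃ x : Fin n → ℤ, (∀ i, d i ∣ x i) ∧
      (∀ p ∈ E, -x p.1 + x p.2.1 ≤ p.2.2) ∧
      (∀ i, ℓ i ≤ x i ∧ x i ≤ u i)) ↔
    (∃ (x₀ : ℤ) (x : Fin n → ℤ), (∀ i, d i ∣ x i) ∧ D ∣ x₀ ∧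
      (∀ p ∈ E, -x p.1 + x p.2.1 ≤ p.2.2) ∧
      (∀ i, ℓ i ≤ x i - x₀ ∧ x i - x₀ ≤ u i)) := by
  constructor
  · rintro ⟨x, h1, h2, h3⟩
    exact ⟨0, x, h1, dvd_zero _, h2, fun i => by simpa using h3 i⟩
  · rintro ⟨x₀, x, h1, hx₀, h2, h3⟩
    refine ⟨fun i => x i - x₀, fun i => ?_, fun p hp => ?_, h3⟩
    · exact dvd_sub (h1 i) ((Finset.dvd_lcm (Finset.mem_univ i)).trans (hD ▸ hx₀))
    · have := h2 p hp; simp only []; linarith
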